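/- For a closed convex set S in R^n and points x1, x2 in S, the directional projection satisfies (x1 - x2)^T Π_S(x1, v) ≤ (x1 - x2)^T v for all v in R^n, where Π_S(x, v) = lim_{ξ→0+} (P_S(x + ξv) - x)/ξ and P_S denotes Euclidean projection onto S. -/
import Mathlib
set_option maxHeartbeats 1000000


open scoped RealInnerProductSpace

/-- Projection inequality for the directional projection onto a closed convex set. -/
theorem stmt0 {n : ℕ} (S : Set (EuclideanSpace ℝ (Fin n)))
    (hclosed : IsClosed S) (hconv : Convex ℝ S)
    (P : EuclideanSpace ℝ (Fin n) → EuclideanSpace ℝ (Fin n))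
    (hP : ∀ y, P y ∈ S ∧ ∀ w ∈ S, ‖y - P y‖ ≤ ‖y - w‖)
    (x1 x2 : EuclideanSpace ℝ (Fin n)) (hx1 : x1 ∈ S) (hx2 : x2 ∈ S)
    (v PiS : EuclideanSpace ℝ (Fin n))
    (hPi : Filter.Tendsto (fun ξ : ℝ => ξ⁻¹ • (P (x1 + ξ • v) - x1))
      (nhdsWithin 0 (Set.Ioi 0)) (nhds PiS)) :
    ⟪x1 - x2, PiS⟫ ≤ ⟪x1 - x2, v⟫ := by
  haveI : Nonempty S := ⟨⟨x1, hx1⟩⟩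
  set f : ℝ → EuclideanSpace ℝ (Fin n) := fun ξ => ξ⁻¹ • (P (x1 + ξ • v) - x1) with hf
  -- variational inequality
  have hvar : ∀ y, ∀ w ∈ S, ⟪y - P y, w - P y⟫ ≤ 0 := by
    intro y w hw
    have hinf : ‖y - P y‖ = ⨅ z : S, ‖y - (z : EuclideanSpace ℝ (Fin n))‖ := by
      have hb : BddBelow (Set.range fun z : S => ‖y - (z : EuclideanSpace ℝ (Fin n))‖) := by
        refine ⟨0, ?_⟩
        rintro r ⟨z, rfl⟩
        exact norm_nonneg _
      refine le_antisymm (le_ciInf fun z => (hP y).2 z z.2) ?_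
      exact ciInf_le hb (⟨P y, (hP y).1⟩ : S)
    exact ((norm_eq_iInf_iff_real_inner_le_zero hconv (hP y).1).1 hinf) w hw
  have hξ0 : Filter.Tendsto (fun ξ : ℝ => ξ) (nhdsWithin 0 (Set.Ioi 0)) (nhds 0) :=
    Filter.tendsto_id.mono_left nhdsWithin_le_nhds
  -- P (x1 + ξ • v) tends to x1
  have hp : Filter.Tendsto (fun ξ : ℝ => P (x1 + ξ • v)) (nhdsWithin 0 (Set.Ioi 0)) (nhds x1) := by
    have h1 : Filter.Tendsto (fun ξ : ℝ => x1 + ξ • f ξ) (nhdsWithin 0 (Set.Ioi 0))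
        (nhds (x1 + (0 : ℝ) • PiS)) := tendsto_const_nhds.add (hξ0.smul hPi)
    rw [zero_smul, add_zero] at h1
    refine Filter.Tendsto.congr' ?_ h1
    filter_upwards [self_mem_nhdsWithin] with ξ hξ
    rw [hf]
    simp only []
    rw [smul_inv_smul₀ (ne_of_gt hξ), add_sub_cancel]
  -- limit of the inner product
  have hlim : Filter.Tendsto (fun ξ : ℝ => ⟪v - f ξ, x2 - P (x1 + ξ • v)⟫)
      (nhdsWithin 0 (Set.Ioi 0)) (nhds ⟪v - PiS, x2 - x1⟫) :=
    (tendsto_const_nhds.sub hPi).inner (tendsto_const_nhds.sub hp)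
  have hev : ∀ᶠ ξ : ℝ in nhdsWithin 0 (Set.Ioi 0),
      ⟪v - f ξ, x2 - P (x1 + ξ • v)⟫ ≤ 0 := by
    filter_upwards [self_mem_nhdsWithin] with ξ (hξ : 0 < ξ)
    have hkey : v - f ξ = ξ⁻¹ • ((x1 + ξ • v) - P (x1 + ξ • v)) := by
      rw [hf]
      simp only []
      rw [smul_sub, smul_sub, smul_add, inv_smul_smul₀ (ne_of_gt hξ)]
      abel
    rw [hkey, real_inner_smul_left]
    have := hvar (x1 + ξ • v) x2 hx2
    have hnn : 0 ≤ ξ⁻¹ := le_of_lt (inv_pos.mpr hξ)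
    nlinarith [this, hnn]
  have hfinal : ⟪v - PiS, x2 - x1⟫ ≤ 0 := le_of_tendsto hlim hev
  have e1 : ⟪v - PiS, x2 - x1⟫ = -⟪x1 - x2, v - PiS⟫ := by
    rw [real_inner_comm, ← neg_sub x1 x2, inner_neg_left]
  rw [e1, neg_nonpos] at hfinal
  rw [inner_sub_right] at hfinal
  linarith
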